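/- arXiv:2102.04322 — 4 statements merged into one kernel-verified Lean document; each statement's English description precedes it below -/
import Mathlib

section
/- Fix μ > 0, positive integers N, r, m, α with α ≤ r ≤ N and mα ≤ N. Then (μ/C(N,r)) · ∑_{φ=α}^{min(r,mα)} [1/(H_φ − H_{φ−α})] · C(mα, φ) · C(N−mα, r−φ) < μ·m·r/N, where H_n = ∑_{i=1}^n 1/i and H_0 = 0. In particular, for α ≥ 2 the service rate of the α quasi-uniform allocation under fixed-size access with exponential service is strictly less than that of the minimal spreading allocation, which equals μmr/N. -/
open Finset
noncomputable def H (n : ℕ) : ℝ := ∑ i ∈ Finset.Icc 1 n, (1 : ℝ) / i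

lemma H_Ioc (n : ℕ) : H n = ∑ i ∈ Finset.Ioc 0 n, (1 : ℝ) / i := by
  rw [H, ← Finset.Icc_add_one_left_eq_Ioc, zero_add]

lemma H_diff {α φ : ℕ} (h : α ≤ φ) :
    H φ - H (φ - α) = ∑ i ∈ Finset.Ioc (φ - α) φ, (1 : ℝ) / i := by
  rw [H_Ioc, H_Ioc, sub_eq_iff_eq_add']
  exact (Finset.sum_Ioc_consecutive _ (Nat.zero_le _) (Nat.sub_le _ _)).symm

lemma H_gt {α φ : ℕ} (hα : 2 ≤ α) (h : α ≤ φ) :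
    (α : ℝ) / φ < H φ - H (φ - α) := by
  have hφ0 : 0 < φ := by omega
  rw [H_diff h]
  have hcard : (Finset.Ioc (φ - α) φ).card = α := by rw [Nat.card_Ioc]; omega
  have : (α : ℝ) / φ = ∑ _i ∈ Finset.Ioc (φ - α) φ, (1 : ℝ) / φ := by
    rw [Finset.sum_const, hcard, nsmul_eq_mul, mul_one_div]
  rw [this]
  apply Finset.sum_lt_sum
  · intro i hi
    simp only [Finset.mem_Ioc] at hi
    apply one_div_le_one_div_of_le
    · exact_mod_cast Nat.pos_of_ne_zero (by omega)
    · exact_mod_cast hi.2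
  · refine ⟨φ - α + 1, ?_, ?_⟩
    · simp only [Finset.mem_Ioc]; omega
    · apply one_div_lt_one_div_of_lt
      · exact_mod_cast Nat.succ_pos _
      · exact_mod_cast (by omega : φ - α + 1 < φ)

lemma vand (a b r : ℕ) (ha : 1 ≤ a) (hr : 1 ≤ r) :
    ∑ φ ∈ Finset.range (r + 1), φ * a.choose φ * b.choose (r - φ)
      = a * (a - 1 + b).choose (r - 1) := by
  obtain ⟨s, rfl⟩ : ∃ s, r = s + 1 := ⟨r - 1, by omega⟩
  rw [Finset.sum_range_succ']
  simp only [Nat.zero_mul, Nat.choose_zero_right, Nat.add_sub_cancel, zero_mul, add_zero]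
  have key : ∀ j, (j + 1) * a.choose (j + 1) = a * (a - 1).choose j := by
    intro j
    have := Nat.add_one_mul_choose_eq (a - 1) j
    simp only [Nat.succ_eq_add_one, Nat.sub_add_cancel ha] at this
    rw [this]
    exact Nat.mul_comm _ _
  calc ∑ j ∈ Finset.range (s + 1), (j + 1) * a.choose (j + 1) * b.choose (s + 1 - (j + 1))
      = ∑ j ∈ Finset.range (s + 1), a * ((a - 1).choose j * b.choose (s - j)) := by
        apply Finset.sum_congr rfl
        intro j hj
        rw [show s + 1 - (j + 1) = s - j by omega, key j, mul_assoc]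
    _ = a * ∑ j ∈ Finset.range (s + 1), (a - 1).choose j * b.choose (s - j) := by
        rw [Finset.mul_sum]
    _ = a * (a - 1 + b).choose s := by
        rw [Nat.add_choose_eq, Finset.Nat.sum_antidiagonal_eq_sum_range_succ_mk]

theorem stmt1 (μ : ℝ) (hμ : 0 < μ) (N r m α : ℕ)
    (hm : 0 < m) (hα : 2 ≤ α) (hαr : α ≤ r) (hrN : r < N) (hmα : m * α ≤ N) :
    (μ / (N.choose r)) *
      ∑ φ ∈ Finset.Icc α (min r (m * α)),
        (1 / (H φ - H (φ - α))) * ((m * α).choose φ) * ((N - m * α).choose (r - φ))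
      < μ * m * r / N := by
  set a := m * α with ha_def
  have hαa : α ≤ a := Nat.le_mul_of_pos_left α hm
  have ha1 : 1 ≤ a := by omega
  set k := min r a with hk_def
  have hαk : α ≤ k := le_min hαr hαa
  have hkr : k ≤ r := min_le_left _ _
  have hka : k ≤ a := min_le_right _ _
  have hN0 : 0 < N := by omega
  have hchoosepos : 0 < N.choose r := Nat.choose_pos (le_of_lt hrN)
  have hcμ : 0 < μ / (N.choose r) := div_pos hμ (by exact_mod_cast hchoosepos)
  -- Step A : strict pointwise bound
  have stepA : ∑ φ ∈ Finset.Icc α k,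
      (1 / (H φ - H (φ - α))) * ((a).choose φ) * ((N - a).choose (r - φ))
      < ∑ φ ∈ Finset.Icc α k,
      ((φ : ℝ) / α) * ((a).choose φ) * ((N - a).choose (r - φ)) := by
    have hbound : ∀ φ ∈ Finset.Icc α k, 1 / (H φ - H (φ - α)) < (φ : ℝ) / α := by
      intro φ hφ
      simp only [Finset.mem_Icc] at hφ
      have hφα : α ≤ φ := hφ.1
      have hφ0 : (0:ℝ) < φ := by exact_mod_cast (by omega : 0 < φ)
      have hα0 : (0:ℝ) < α := by exact_mod_cast (by omega : 0 < α)
      have h1 := H_gt hα hφα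
      have hD : 0 < H φ - H (φ - α) := lt_trans (div_pos hα0 hφ0) h1
      have h1' : (α:ℝ) < (H φ - H (φ - α)) * φ := (div_lt_iff₀ hφ0).mp h1
      rw [div_lt_div_iff₀ hD hα0]
      nlinarith [h1']
    apply Finset.sum_lt_sum
    · intro φ hφ
      have h1 := le_of_lt (hbound φ hφ)
      apply mul_le_mul_of_nonneg_right _ (Nat.cast_nonneg _)
      exact mul_le_mul_of_nonneg_right h1 (Nat.cast_nonneg _)
    · refine ⟨k, Finset.mem_Icc.mpr ⟨hαk, le_refl k⟩, ?_⟩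
      have hc1 : 0 < (a).choose k := Nat.choose_pos hka
      have hc2 : 0 < (N - a).choose (r - k) := by
        apply Nat.choose_pos
        omega
      have h1 := hbound k (Finset.mem_Icc.mpr ⟨hαk, le_refl k⟩)
      apply mul_lt_mul_of_pos_right _ (by exact_mod_cast hc2)
      exact mul_lt_mul_of_pos_right h1 (by exact_mod_cast hc1)
  -- Step B : sum bound via Vandermonde
  have hNa : a - 1 + (N - a) = N - 1 := by omega
  have hvand := vand a (N - a) r ha1 (by omega)
  rw [hNa] at hvand
  have stepB : ∑ φ ∈ Finset.Icc α k,
      ((φ : ℝ) / α) * ((a).choose φ) * ((N - a).choose (r - φ))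
      ≤ (m : ℝ) * (N - 1).choose (r - 1) := by
    have hα0 : (0:ℝ) < α := by exact_mod_cast (by omega : 0 < α)
    have hsub : Finset.Icc α k ⊆ Finset.range (r + 1) := by
      intro x hx
      simp only [Finset.mem_Icc] at hx
      simp only [Finset.mem_range]
      omega
    have hnatle : ∑ φ ∈ Finset.Icc α k, φ * (a).choose φ * ((N - a).choose (r - φ))
        ≤ a * (N - 1).choose (r - 1) := by
      rw [← hvand]
      exact Finset.sum_le_sum_of_subset hsub
    calc ∑ φ ∈ Finset.Icc α k, ((φ : ℝ) / α) * ((a).choose φ) * ((N - a).choose (r - φ))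
        = (1/α) * ∑ φ ∈ Finset.Icc α k,
            ((φ : ℝ) * ((a).choose φ) * ((N - a).choose (r - φ))) := by
          rw [Finset.mul_sum]
          apply Finset.sum_congr rfl
          intro x hx
          ring
      _ = (1/α) * ((∑ φ ∈ Finset.Icc α k,
            φ * (a).choose φ * ((N - a).choose (r - φ)) : ℕ) : ℝ) := by
          push_cast
          ring_nf
      _ ≤ (1/α) * ((a * (N - 1).choose (r - 1) : ℕ) : ℝ) := by
          apply mul_le_mul_of_nonneg_left _ (by positivity)
          exact_mod_cast hnatle
      _ = (m : ℝ) * (N - 1).choose (r - 1) := by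
          push_cast [ha_def]
          field_simp
  -- Step C : combine
  have hfinal : (μ / (N.choose r)) * ((m : ℝ) * (N - 1).choose (r - 1)) = μ * m * r / N := by
    have hid := Nat.add_one_mul_choose_eq (N - 1) (r - 1)
    rw [Nat.sub_add_cancel (by omega : 1 ≤ N),
      Nat.sub_add_cancel (by omega : 1 ≤ r)] at hid
    have hidR : (N : ℝ) * (N - 1).choose (r - 1) = (N.choose r) * r := by exact_mod_cast hid
    have hNR : (0:ℝ) < N := by exact_mod_cast hN0
    have hCR : (0:ℝ) < N.choose r := by exact_mod_cast hchoosepos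
    field_simp
    nlinarith [hidR, hμ, mul_pos hμ (Nat.cast_pos.mpr hm)]
  calc (μ / (N.choose r)) *
      ∑ φ ∈ Finset.Icc α k,
        (1 / (H φ - H (φ - α))) * ((a).choose φ) * ((N - a).choose (r - φ))
      < (μ / (N.choose r)) *
        ∑ φ ∈ Finset.Icc α k,
        ((φ : ℝ) / α) * ((a).choose φ) * ((N - a).choose (r - φ)) := by
        exact mul_lt_mul_of_pos_left stepA hcμ
    _ ≤ (μ / (N.choose r)) * ((m : ℝ) * (N - 1).choose (r - 1)) :=
        mul_le_mul_of_nonneg_left stepB (le_of_lt hcμ)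
    _ = μ * m * r / N := hfinal
end

section
/- Fix μ > 0, 0 < p < 1, and integers m ≥ 1, α ≥ 2. Then ∑_{φ=α}^{mα} [μ/(H_φ − H_{φ−α})] · C(mα, φ) · (1−p)^φ · p^{mα−φ} < μ·m·(1−p). In particular, under the probabilistic access model with exponential service time, the minimal spreading allocation maximizes the service rate over all α quasi-uniform allocations. -/
open Finset
lemma binom_mean (N : ℕ) (x y : ℝ) :
    ∑ φ ∈ Finset.range (N + 2), (φ : ℝ) * ((N + 1).choose φ) * x ^ φ * y ^ (N + 1 - φ)
      = (N + 1) * x * (x + y) ^ N := by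
  rw [Finset.sum_range_succ']
  simp only [Nat.cast_zero, zero_mul, add_zero]
  have h : ∀ k ∈ Finset.range (N + 1),
      ((k + 1 : ℕ) : ℝ) * ((N + 1).choose (k + 1)) * x ^ (k + 1) * y ^ (N + 1 - (k + 1))
        = ((N : ℝ) + 1) * x * (x ^ k * y ^ (N - k) * (N.choose k)) := by
    intro k _
    have hnat : (N + 1) * N.choose k = (N + 1).choose (k + 1) * (k + 1) :=
      Nat.add_one_mul_choose_eq N k
    have : ((k + 1 : ℕ) : ℝ) * ((N + 1).choose (k + 1)) = ((N : ℝ) + 1) * (N.choose k) := by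
      have h2 := congrArg (Nat.cast (R := ℝ)) hnat
      push_cast at h2 ⊢
      linarith
    rw [Nat.succ_sub_succ]
    calc ((k + 1 : ℕ) : ℝ) * ((N + 1).choose (k + 1)) * x ^ (k + 1) * y ^ (N - k)
        = (((k + 1 : ℕ) : ℝ) * ((N + 1).choose (k + 1))) * x ^ (k + 1) * y ^ (N - k) := by ring
      _ = ((N : ℝ) + 1) * (N.choose k) * x ^ (k + 1) * y ^ (N - k) := by rw [this]
      _ = ((N : ℝ) + 1) * x * (x ^ k * y ^ (N - k) * (N.choose k)) := by ring
  rw [Finset.sum_congr rfl h, ← Finset.mul_sum, ← add_pow]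

lemma H_gap (φ α : ℕ) (hαφ : α ≤ φ) (hα : 2 ≤ α) :
    (α : ℝ) / φ < H φ - H (φ - α) := by
  have hIcc : ∀ n : ℕ, Finset.Icc 1 n = Finset.Ioc 0 n := fun n => Finset.Icc_add_one_left_eq_Ioc 0 n
  have hsplit : H (φ - α) + ∑ i ∈ Finset.Ioc (φ - α) φ, (1 : ℝ) / i = H φ := by
    unfold H
    rw [hIcc, hIcc]
    exact Finset.sum_Ioc_consecutive _ (Nat.zero_le _) (Nat.sub_le _ _)
  have heq : H φ - H (φ - α) = ∑ i ∈ Finset.Ioc (φ - α) φ, (1 : ℝ) / i := by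
    linarith
  rw [heq]
  have hφpos : 0 < φ := lt_of_lt_of_le (by omega) hαφ
  have hcard : (Finset.Ioc (φ - α) φ).card = α := by
    rw [Nat.card_Ioc]; omega
  have hconst : (α : ℝ) / φ = ∑ _i ∈ Finset.Ioc (φ - α) φ, (1 : ℝ) / φ := by
    rw [Finset.sum_const, hcard, nsmul_eq_mul]
    ring
  rw [hconst]
  apply Finset.sum_lt_sum
  · intro i hi
    rw [Finset.mem_Ioc] at hi
    apply one_div_le_one_div_of_le
    · have hi0 : 0 < i := Nat.lt_of_le_of_lt (Nat.zero_le _) hi.1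
      exact_mod_cast hi0
    · exact_mod_cast hi.2
  · refine ⟨φ - α + 1, ?_, ?_⟩
    · rw [Finset.mem_Ioc]; omega
    · apply one_div_lt_one_div_of_lt
      · exact_mod_cast Nat.succ_pos _
      · exact_mod_cast (by omega : φ - α + 1 < φ)

theorem stmt4 (μ p : ℝ) (hμ : 0 < μ) (hp0 : 0 < p) (hp1 : p < 1)
    (m α : ℕ) (hm : 1 ≤ m) (hα : 2 ≤ α) :
    ∑ φ ∈ Finset.Icc α (m * α),
        (μ / (H φ - H (φ - α))) * ((m * α).choose φ) * (1 - p) ^ φ * p ^ (m * α - φ)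
      < μ * m * (1 - p) := by
  set n := m * α with hn
  have hαn : α ≤ n := by
    calc α = 1 * α := (one_mul α).symm
    _ ≤ m * α := Nat.mul_le_mul_right α hm
  have hx : (0:ℝ) < 1 - p := by linarith
  have hαpos : 0 < α := by omega
  have key : ∀ φ ∈ Finset.Icc α n,
      (μ / (H φ - H (φ - α))) * (n.choose φ) * (1 - p) ^ φ * p ^ (n - φ)
        < (μ * φ / α) * (n.choose φ) * (1 - p) ^ φ * p ^ (n - φ) := by
    intro φ hφ
    rw [Finset.mem_Icc] at hφ
    have hφpos : 0 < φ := lt_of_lt_of_le (by omega) hφ.1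
    have hgap := H_gap φ α hφ.1 hα
    have hratio : (0:ℝ) < (α:ℝ) / φ := by positivity
    have h1 : μ / (H φ - H (φ - α)) < μ * φ / α := by
      have := div_lt_div_of_pos_left hμ hratio hgap
      calc μ / (H φ - H (φ - α)) < μ / ((α:ℝ) / φ) := this
        _ = μ * φ / α := by
            rw [div_div_eq_mul_div]
    have hC : (0:ℝ) < (n.choose φ : ℝ) := by
      exact_mod_cast Nat.choose_pos hφ.2
    have hfac : (0:ℝ) < (n.choose φ : ℝ) * (1 - p) ^ φ * p ^ (n - φ) := by positivity
    calc (μ / (H φ - H (φ - α))) * (n.choose φ) * (1 - p) ^ φ * p ^ (n - φ)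
        = (μ / (H φ - H (φ - α))) * ((n.choose φ : ℝ) * (1 - p) ^ φ * p ^ (n - φ)) := by ring
      _ < (μ * φ / α) * ((n.choose φ : ℝ) * (1 - p) ^ φ * p ^ (n - φ)) :=
          mul_lt_mul_of_pos_right h1 hfac
      _ = (μ * φ / α) * (n.choose φ) * (1 - p) ^ φ * p ^ (n - φ) := by ring
  have hne : (Finset.Icc α n).Nonempty := Finset.nonempty_Icc.mpr hαn
  have step1 := Finset.sum_lt_sum_of_nonempty hne key
  have step2 : ∑ φ ∈ Finset.Icc α n, (μ * φ / α) * (n.choose φ) * (1 - p) ^ φ * p ^ (n - φ)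
      ≤ ∑ φ ∈ Finset.range (n + 1), (μ * φ / α) * (n.choose φ) * (1 - p) ^ φ * p ^ (n - φ) := by
    apply Finset.sum_le_sum_of_subset_of_nonneg
    · intro i hi
      rw [Finset.mem_Icc] at hi
      rw [Finset.mem_range]
      omega
    · intro i _ _
      positivity
  have hN : n - 1 + 1 = n := by omega
  have step3 : ∑ φ ∈ Finset.range (n + 1), (μ * φ / α) * (n.choose φ) * (1 - p) ^ φ * p ^ (n - φ)
      = μ * m * (1 - p) := by
    have hrw : ∀ φ ∈ Finset.range (n + 1),
        (μ * φ / α) * (n.choose φ) * (1 - p) ^ φ * p ^ (n - φ)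
          = (μ / α) * ((φ:ℝ) * (n.choose φ) * (1 - p) ^ φ * p ^ (n - φ)) := by
      intro φ _; ring
    rw [Finset.sum_congr rfl hrw, ← Finset.mul_sum]
    have hb := binom_mean (n - 1) (1 - p) p
    rw [show n - 1 + 2 = n + 1 from by omega, hN] at hb
    rw [hb]
    have : (1 - p + p : ℝ) = 1 := by ring
    rw [this, one_pow]
    have hcast : ((n - 1 : ℕ) : ℝ) + 1 = (n : ℝ) := by
      push_cast [Nat.cast_sub (by omega : 1 ≤ n)]; ring
    rw [hcast]
    have hncast : (n : ℝ) = (m : ℝ) * α := by rw [hn]; push_cast; ring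
    rw [hncast]
    have hα0 : (α : ℝ) ≠ 0 := by positivity
    field_simp
  calc ∑ φ ∈ Finset.Icc α n,
        (μ / (H φ - H (φ - α))) * (n.choose φ) * (1 - p) ^ φ * p ^ (n - φ)
      < ∑ φ ∈ Finset.Icc α n, (μ * φ / α) * (n.choose φ) * (1 - p) ^ φ * p ^ (n - φ) := step1
    _ ≤ ∑ φ ∈ Finset.range (n + 1), (μ * φ / α) * (n.choose φ) * (1 - p) ^ φ * p ^ (n - φ) := step2
    _ = μ * m * (1 - p) := step3
end

section
/- For μ > 0 and 0 < p < 1, define f(α) = (μα/H_α)(1−p)^α for integers α ≥ 1. Then f(α) ≥ f(α+1) whenever α ≥ (1−p)/p, and f(α) ≤ f(α+1) whenever α ≤ (1/2 − p)/p. Consequently, any maximizer of f over the positive integers lies in the interval [(1/2−p)/p, (1−p)/p] (when this interval contains a positive integer region, i.e., p < 1/2). -/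
open Finset
lemma H_succ (n : ℕ) : H (n+1) = H n + 1/((n:ℝ)+1) := by
  unfold H
  rw [Finset.sum_Icc_succ_top (by omega : 1 ≤ n+1)]
  push_cast
  ring

lemma H_pos (n : ℕ) (hn : 1 ≤ n) : 0 < H n := by
  unfold H
  apply Finset.sum_pos
  · intro i hi
    simp only [Finset.mem_Icc] at hi
    have : (0:ℝ) < i := by exact_mod_cast Nat.lt_of_lt_of_le Nat.zero_lt_one hi.1
    positivity
  · exact ⟨1, by simp [Finset.mem_Icc]; omega⟩

lemma H_le (n : ℕ) : H n ≤ n := by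
  induction n with
  | zero => simp [H]
  | succ k ih =>
    rw [H_succ]
    have : 1/((k:ℝ)+1) ≤ 1 := by
      rw [div_le_one (by positivity)]; linarith [Nat.cast_nonneg (α := ℝ) k]
    push_cast
    linarith

lemma H_ge (n : ℕ) (hn : 1 ≤ n) : 2*(n:ℝ) ≤ ((n:ℝ)+1) * H n := by
  induction n with
  | zero => omega
  | succ k ih =>
    rcases Nat.eq_or_lt_of_le hn with h | h
    · have hk0 : k = 0 := by omega
      subst hk0
      have : H 1 = 1 := by simp [H]
      rw [this]; norm_num
    · have hk : 1 ≤ k := by omega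
      have ihk := ih hk
      have hk0 : (0:ℝ) < (k:ℝ)+1 := by positivity
      have hs := H_succ k
      have ht : ((k:ℝ)+1) * (1/((k:ℝ)+1)) = 1 := by field_simp
      push_cast
      rw [hs]
      nlinarith [H_pos k hk]

lemma key_le (μ p : ℝ) (hμ : 0 < μ) (hq : 0 < 1 - p) (α : ℕ) (hα : 1 ≤ α) :
    (μ * ((α:ℝ) + 1) / H (α + 1)) * (1 - p) ^ (α + 1) ≤ (μ * (α:ℝ) / H α) * (1 - p) ^ α ↔
    ((α:ℝ) + 1) * (1 - p) * H α ≤ (α:ℝ) * H (α + 1) := by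
  have h1 := H_pos α hα
  have h2 := H_pos (α+1) (by omega)
  have h3 : (0:ℝ) < (1-p)^α := pow_pos hq α
  rw [pow_succ, div_mul_eq_mul_div, div_mul_eq_mul_div, div_le_div_iff₀ h2 h1]
  constructor <;> intro h <;> nlinarith [mul_pos hμ h3]

lemma key_le' (μ p : ℝ) (hμ : 0 < μ) (hq : 0 < 1 - p) (α : ℕ) (hα : 1 ≤ α) :
    (μ * (α:ℝ) / H α) * (1 - p) ^ α ≤ (μ * ((α:ℝ) + 1) / H (α + 1)) * (1 - p) ^ (α + 1) ↔
    (α:ℝ) * H (α + 1) ≤ ((α:ℝ) + 1) * (1 - p) * H α := by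
  have h1 := H_pos α hα
  have h2 := H_pos (α+1) (by omega)
  have h3 : (0:ℝ) < (1-p)^α := pow_pos hq α
  rw [pow_succ, div_mul_eq_mul_div, div_mul_eq_mul_div, div_le_div_iff₀ h1 h2]
  constructor <;> intro h <;> nlinarith [mul_pos hμ h3]

theorem stmt12 (μ p : ℝ) (hμ : 0 < μ) (hp0 : 0 < p) (hp1 : p < 1) :
    (∀ α : ℕ, 1 ≤ α → ((1 - p) / p ≤ (α : ℝ) →
        (μ * (α + 1) / H (α + 1)) * (1 - p) ^ (α + 1) ≤ (μ * α / H α) * (1 - p) ^ α)) ∧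
    (∀ α : ℕ, 1 ≤ α → ((α : ℝ) ≤ (1 / 2 - p) / p →
        (μ * α / H α) * (1 - p) ^ α ≤ (μ * (α + 1) / H (α + 1)) * (1 - p) ^ (α + 1))) ∧
    (p < 1 / 2 → ∀ α₀ : ℕ, 1 ≤ α₀ →
      (∀ β : ℕ, 1 ≤ β → (μ * β / H β) * (1 - p) ^ β ≤ (μ * α₀ / H α₀) * (1 - p) ^ α₀) →
      (1 / 2 - p) / p ≤ (α₀ : ℝ) ∧ (α₀ : ℝ) ≤ (1 - p) / p) := by
  have hq : 0 < 1 - p := by linarith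
  -- strict decrease when α ≥ (1-p)/p
  have dec : ∀ α : ℕ, 1 ≤ α → (1 - p) / p ≤ (α : ℝ) →
      ((α:ℝ) + 1) * (1 - p) * H α < (α:ℝ) * H (α + 1) := by
    intro α hα hle
    have h1 : 1 - p ≤ (α:ℝ) * p := by
      rw [div_le_iff₀ hp0] at hle; linarith
    have h2 := H_pos α hα
    have h3 := H_succ α
    have hc : (1:ℝ) ≤ (α:ℝ) := by exact_mod_cast hα
    have hk0 : (0:ℝ) < (α:ℝ)+1 := by positivity
    have h4 : ((α:ℝ)+1) * (1-p) ≤ (α:ℝ) := by nlinarith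
    have h5 : H α < H (α+1) := by
      rw [h3]; have : 0 < 1/((α:ℝ)+1) := by positivity
      linarith
    nlinarith [mul_le_mul_of_nonneg_right h4 h2.le,
      mul_lt_mul_of_pos_left h5 (show (0:ℝ) < (α:ℝ) by linarith)]
  -- strict increase when α < (1/2-p)/p (weak form when ≤)
  have inc : ∀ α : ℕ, 1 ≤ α → ((α:ℝ)+1) * p ≤ 1/2 →
      (α:ℝ) * H (α + 1) ≤ ((α:ℝ) + 1) * (1 - p) * H α := by
    intro α hα hhalf
    have h2 := H_pos α hα
    have h3 := H_succ α
    have hge := H_ge α hα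
    have hc : (1:ℝ) ≤ (α:ℝ) := by exact_mod_cast hα
    have hk0 : (0:ℝ) < (α:ℝ)+1 := by positivity
    have ht : ((α:ℝ)+1) * (1/((α:ℝ)+1)) = 1 := by field_simp
    have ht0 : (0:ℝ) < 1/((α:ℝ)+1) := by positivity
    rw [h3]
    -- need: α*(Hα + t) ≤ (α+1)(1-p)Hα, i.e. α*t ≤ (1-(α+1)p)*Hα
    have hhp : (1:ℝ)/2 ≤ 1 - ((α:ℝ)+1)*p := by linarith
    -- Hα ≥ 2αt
    have hH : 2*(α:ℝ)*(1/((α:ℝ)+1)) ≤ H α := by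
      calc 2*(α:ℝ)*(1/((α:ℝ)+1)) ≤ (((α:ℝ)+1) * H α)*(1/((α:ℝ)+1)) :=
            mul_le_mul_of_nonneg_right hge ht0.le
        _ = H α := by field_simp
    nlinarith [mul_le_mul hhp hH (by positivity) (by linarith)]
  have incs : ∀ α : ℕ, 1 ≤ α → ((α:ℝ)+1) * p < 1/2 →
      (α:ℝ) * H (α + 1) < ((α:ℝ) + 1) * (1 - p) * H α := by
    intro α hα hhalf
    have h2 := H_pos α hα
    have h3 := H_succ α
    have hge := H_ge α hα
    have hc : (1:ℝ) ≤ (α:ℝ) := by exact_mod_cast hα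
    have hk0 : (0:ℝ) < (α:ℝ)+1 := by positivity
    have ht0 : (0:ℝ) < 1/((α:ℝ)+1) := by positivity
    rw [h3]
    have hhp : (1:ℝ)/2 < 1 - ((α:ℝ)+1)*p := by linarith
    have hH : 2*(α:ℝ)*(1/((α:ℝ)+1)) ≤ H α := by
      calc 2*(α:ℝ)*(1/((α:ℝ)+1)) ≤ (((α:ℝ)+1) * H α)*(1/((α:ℝ)+1)) :=
            mul_le_mul_of_nonneg_right hge ht0.le
        _ = H α := by field_simp
    nlinarith [mul_le_mul_of_nonneg_left hH (by linarith : (0:ℝ) ≤ 1 - ((α:ℝ)+1)*p),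
      mul_lt_mul_of_pos_right hhp (show (0:ℝ) < 2*(α:ℝ)*(1/((α:ℝ)+1)) by positivity)]
  refine ⟨?_, ?_, ?_⟩
  · intro α hα hle
    rw [key_le μ p hμ hq α hα]
    exact (dec α hα hle).le
  · intro α hα hle
    rw [key_le' μ p hμ hq α hα]
    apply inc α hα
    rw [le_div_iff₀ hp0] at hle
    linarith
  · intro phalf α₀ hα₀ hmax
    constructor
    · by_contra hcon
      push_neg at hcon
      have h1 : ((α₀:ℝ)+1) * p < 1/2 := by
        rw [lt_div_iff₀ hp0] at hcon
        linarith
      have := (key_le μ p hμ hq α₀ hα₀).mpr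
      have hlt := incs α₀ hα₀ h1
      -- f(α₀) < f(α₀+1), contradicting maximality at β := α₀+1
      have hmx := hmax (α₀+1) (by omega)
      have := (key_le μ p hμ hq α₀ hα₀).mp (by push_cast at hmx ⊢; convert hmx using 2 <;> push_cast <;> ring)
      linarith
    · by_contra hcon
      push_neg at hcon
      rcases Nat.eq_or_lt_of_le hα₀ with h1 | h1
      · -- α₀ = 1 ⟹ (1-p)/p < 1 ⟹ p > 1/2, contradiction
        rw [div_lt_iff₀ hp0] at hcon
        rw [← h1] at hcon
        push_cast at hcon
        linarith
      · obtain ⟨β, rfl⟩ : ∃ β, α₀ = β + 1 := ⟨α₀ - 1, by omega⟩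
        have hβ : 1 ≤ β := by omega
        have hmx := hmax β hβ
        have hfle : (β:ℝ) * H (β + 1) ≤ ((β:ℝ) + 1) * (1 - p) * H β :=
          (key_le' μ p hμ hq β hβ).mp (by push_cast at hmx ⊢; convert hmx using 2 <;> push_cast <;> ring)
        by_cases hc2 : (1 - p) / p ≤ (β : ℝ)
        · exact absurd hfle (not_le.mpr (dec β hβ hc2))
        · push_neg at hc2
          -- β < (1-p)/p < β+1 : show strict decrease anyway
          have hp2 : ((β:ℝ)+1) * p < 1 := by
            rw [div_lt_iff₀ hp0] at hcon
            rw [lt_div_iff₀ hp0] at hc2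
            nlinarith
          have hp3 : 1 - p < ((β:ℝ)+1) * p := by
            rw [div_lt_iff₀ hp0] at hcon
            push_cast at hcon
            linarith
          have h2 := H_pos β hβ
          have h3 := H_succ β
          have hcb : (1:ℝ) ≤ (β:ℝ) := by exact_mod_cast hβ
          have hk0 : (0:ℝ) < (β:ℝ)+1 := by positivity
          have ht : ((β:ℝ)+1) * (1/((β:ℝ)+1)) = 1 := by field_simp
          have hHle := H_le β
          -- (β+1)(1-p)Hβ = βHβ + (1-(β+1)p)Hβ < βHβ + p·Hβ ≤ βHβ + β/(β+1) = βH(β+1)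
          have key : ((β:ℝ) + 1) * (1 - p) * H β < (β:ℝ) * H (β + 1) := by
            rw [h3]
            have s1 : (1 - ((β:ℝ)+1)*p) * H β < p * H β :=
              mul_lt_mul_of_pos_right (by linarith) h2
            have s2 : p * H β ≤ (1/((β:ℝ)+1)) * (β:ℝ) := by
              have hple : p < 1/((β:ℝ)+1) := by
                rw [lt_div_iff₀ hk0]; linarith
              calc p * H β ≤ p * (β:ℝ) := mul_le_mul_of_nonneg_left hHle hp0.le
                _ ≤ (1/((β:ℝ)+1)) * (β:ℝ) := mul_le_mul_of_nonneg_right hple.le (by linarith)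
            nlinarith
          linarith
end

section
/- Fix μ > 0, integers m ≥ 1, α ≥ 2, and 0 ≤ p ≤ 1 with (1−p)^{α−1} ≤ 1/(α·C(mα−1, α−1)). Then ∑_{φ=α}^{mα} [μα/(H_φ−H_{φ−α})]·C(mα,φ)(1−p)^φ p^{mα−φ} ≤ μm(1−p). That is, if p ≥ 1 − (α·C(mα−1,α−1))^{−1/(α−1)} for all α ≥ 2, the minimal spreading allocation maximizes the service rate under the probabilistic access model with scaled exponential service. -/
open Finset
lemma nat_choose_id (n φ : ℕ) (hn : 1 ≤ n) (hφ : 1 ≤ φ) :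
    n * (n - 1).choose (φ - 1) = φ * n.choose φ := by
  obtain ⟨n₀, rfl⟩ : ∃ n₀, n = n₀ + 1 := ⟨n - 1, by omega⟩
  obtain ⟨k, rfl⟩ : ∃ k, φ = k + 1 := ⟨φ - 1, by omega⟩
  simpa [Nat.succ_sub_one, Nat.mul_comm] using Nat.add_one_mul_choose_eq n₀ k

theorem stmt14 (μ p : ℝ) (hμ : 0 < μ) (hp0 : 0 ≤ p) (hp1 : p ≤ 1)
    (m α : ℕ) (hm : 1 ≤ m) (hα : 2 ≤ α)
    (hcond : (1 - p) ^ (α - 1) ≤ 1 / ((α : ℝ) * ((m * α - 1).choose (α - 1)))) :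
    ∑ φ ∈ Finset.Icc α (m * α),
        (μ * α / (H φ - H (φ - α))) * ((m * α).choose φ) * (1 - p) ^ φ * p ^ (m * α - φ)
      ≤ μ * m * (1 - p) := by
  set n := m * α with hn
  set q := 1 - p with hqdef
  have hq0 : 0 ≤ q := by linarith
  have hαn : α ≤ n := Nat.le_mul_of_pos_left α hm
  have hα0 : 0 < α := by omega
  set C : ℝ := ((n - 1).choose (α - 1) : ℝ) with hC
  have hCpos : 0 < C := by
    have h : 0 < (n - 1).choose (α - 1) := Nat.choose_pos (by omega)
    rw [hC]
    exact_mod_cast h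
  -- pointwise bound
  have key : ∀ φ ∈ Finset.Icc α n,
      (μ * α / (H φ - H (φ - α))) * ((n).choose φ) * q ^ φ * p ^ (n - φ)
        ≤ (μ * n * C * q ^ α) * (((n - α).choose (φ - α) : ℝ) * q ^ (φ - α) * p ^ (n - φ)) := by
    intro φ hφ
    rw [Finset.mem_Icc] at hφ
    obtain ⟨hφ1, hφ2⟩ := hφ
    have hφ0 : 0 < φ := by omega
    -- harmonic bound
    have hsplit : H φ - H (φ - α) = ∑ i ∈ Finset.Ioc (φ - α) φ, (1 : ℝ) / i := by
      have h1 : H φ = ∑ i ∈ Finset.Ioc 0 φ, (1 : ℝ) / i := by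
        rw [H, ← Finset.Icc_add_one_left_eq_Ioc, zero_add]
      have h2 : H (φ - α) = ∑ i ∈ Finset.Ioc 0 (φ - α), (1 : ℝ) / i := by
        rw [H, ← Finset.Icc_add_one_left_eq_Ioc, zero_add]
      rw [h1, h2, ← Finset.sum_Ioc_consecutive _ (Nat.zero_le (φ - α)) (Nat.sub_le φ α)]
      ring
    have hHge : (α : ℝ) / φ ≤ H φ - H (φ - α) := by
      rw [hsplit]
      have := Finset.card_nsmul_le_sum (Finset.Ioc (φ - α) φ) (fun i => (1 : ℝ) / i)
        ((1 : ℝ) / φ) (by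
          intro i hi
          rw [Finset.mem_Ioc] at hi
          apply one_div_le_one_div_of_le
          · have hipos : 0 < i := by omega
            exact_mod_cast hipos
          · exact_mod_cast hi.2)
      rw [Nat.card_Ioc] at this
      have hcard : φ - (φ - α) = α := by omega
      rw [hcard, nsmul_eq_mul] at this
      calc (α : ℝ) / φ = α * (1 / φ) := by ring
        _ ≤ _ := this
    have hHpos : 0 < H φ - H (φ - α) := by
      have : (0 : ℝ) < (α : ℝ) / φ := by positivity
      linarith
    have hdiv : μ * α / (H φ - H (φ - α)) ≤ μ * φ := by
      rw [div_le_iff₀ hHpos]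
      calc μ * α = μ * φ * ((α : ℝ) / φ) := by
            field_simp
        _ ≤ μ * φ * (H φ - H (φ - α)) := by
            apply mul_le_mul_of_nonneg_left hHge
            positivity
    -- nat identities
    have hid : (n : ℝ) * ((n - 1).choose (φ - 1)) = (φ : ℝ) * (n.choose φ) := by
      have hnat : n * ((n - 1).choose (φ - 1)) = φ * n.choose φ :=
        nat_choose_id n φ (by omega) (by omega)
      exact_mod_cast hnat
    have hckey : ((n - 1).choose (φ - 1) : ℝ) ≤ C * ((n - α).choose (φ - α)) := by
      have h1 : (n - 1).choose (φ - 1) * (φ - 1).choose (α - 1)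
          = (n - 1).choose (α - 1) * ((n - 1) - (α - 1)).choose ((φ - 1) - (α - 1)) :=
        Nat.choose_mul (by omega)
      have h2 : (n - 1) - (α - 1) = n - α := by omega
      have h3 : (φ - 1) - (α - 1) = φ - α := by omega
      have h4 : 1 ≤ (φ - 1).choose (α - 1) := Nat.choose_pos (by omega)
      have hnat : (n - 1).choose (φ - 1) ≤ (n - 1).choose (α - 1) * (n - α).choose (φ - α) := by
        calc (n - 1).choose (φ - 1) ≤ (n - 1).choose (φ - 1) * (φ - 1).choose (α - 1) :=
              Nat.le_mul_of_pos_right _ h4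
          _ = _ := by rw [h1, h2, h3]
      rw [hC]
      exact_mod_cast hnat
    have hqpow : q ^ φ = q ^ α * q ^ (φ - α) := by
      rw [← pow_add]
      congr 1
      omega
    -- combine
    calc (μ * α / (H φ - H (φ - α))) * ((n).choose φ) * q ^ φ * p ^ (n - φ)
        ≤ (μ * φ) * ((n).choose φ) * q ^ φ * p ^ (n - φ) := by
          apply mul_le_mul_of_nonneg_right _ (by positivity)
          apply mul_le_mul_of_nonneg_right _ (by positivity)
          exact mul_le_mul_of_nonneg_right hdiv (by positivity)
      _ = (μ * ((n : ℝ) * ((n - 1).choose (φ - 1)))) * q ^ φ * p ^ (n - φ) := by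
          rw [hid]; ring
      _ ≤ (μ * ((n : ℝ) * (C * ((n - α).choose (φ - α))))) * q ^ φ * p ^ (n - φ) := by
          apply mul_le_mul_of_nonneg_right _ (by positivity)
          apply mul_le_mul_of_nonneg_right _ (by positivity)
          apply mul_le_mul_of_nonneg_left _ (le_of_lt hμ)
          exact mul_le_mul_of_nonneg_left hckey (by positivity)
      _ = (μ * n * C * q ^ α) * (((n - α).choose (φ - α) : ℝ) * q ^ (φ - α) * p ^ (n - φ)) := by
          rw [hqpow]; ring
  -- sum the binomial
  have hbinom : ∑ φ ∈ Finset.Icc α n,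
      (((n - α).choose (φ - α) : ℝ) * q ^ (φ - α) * p ^ (n - φ)) = 1 := by
    have hre : Finset.Icc α n = Finset.Ico α (n + 1) := by
      rw [Finset.Ico_add_one_right_eq_Icc]
    rw [hre, Finset.sum_Ico_eq_sum_range]
    have hrn : n + 1 - α = (n - α) + 1 := by omega
    rw [hrn]
    have hqp : q + p = 1 := by rw [hqdef]; ring
    have hb := add_pow q p (n - α)
    rw [hqp, one_pow] at hb
    rw [hb]
    apply Finset.sum_congr rfl
    intro i hi
    rw [Finset.mem_range] at hi
    have h1 : α + i - α = i := by omega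
    have h2 : n - (α + i) = (n - α) - i := by omega
    rw [h1, h2]
    ring
  calc ∑ φ ∈ Finset.Icc α n,
        (μ * α / (H φ - H (φ - α))) * ((n).choose φ) * q ^ φ * p ^ (n - φ)
      ≤ ∑ φ ∈ Finset.Icc α n,
        (μ * n * C * q ^ α) * (((n - α).choose (φ - α) : ℝ) * q ^ (φ - α) * p ^ (n - φ)) :=
        Finset.sum_le_sum key
    _ = (μ * n * C * q ^ α) * ∑ φ ∈ Finset.Icc α n,
        (((n - α).choose (φ - α) : ℝ) * q ^ (φ - α) * p ^ (n - φ)) := by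
        rw [Finset.mul_sum]
    _ = μ * n * C * q ^ α := by rw [hbinom]; ring
    _ = (μ * n * q) * (C * q ^ (α - 1)) := by
        have : q ^ α = q * q ^ (α - 1) := by
          rw [← pow_succ']
          congr 1
          omega
        rw [this]; ring
    _ ≤ (μ * n * q) * (C * (1 / ((α : ℝ) * C))) := by
        apply mul_le_mul_of_nonneg_left _ (by positivity)
        exact mul_le_mul_of_nonneg_left hcond (le_of_lt hCpos)
    _ = μ * m * q := by
        have hne : (α : ℝ) ≠ 0 := by exact_mod_cast hα0.ne'
        have hnc : (n : ℝ) = m * α := by exact_mod_cast hn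
        field_simp [hnc]
        rw [hnc]; ring
end
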